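/- (Algebraic one-soliton solution of the nonlocal massive Thirring model) Let k ∈ ℝ with k ≠ 0. Define θ(x,t) = k²·x + t/k² and q1(x,t) = −2i·k³·e^{iθ(x,t)}/(2k⁴x − i·k² − 2t), q3(x,t) = −2i·k·e^{iθ(x,t)}/(2k⁴x + i·k² − 2t); the denominators are nonzero for all (x,t) ∈ ℝ². Then: (1) the pair (q1, q3) satisfies the nonlocal massive Thirring model with δ = 1 at every (x,t) ∈ ℝ², i.e. i·∂ₜq1(x,t) + q3(x,t) + q1(x,t)·q3(x,t)·q3(−x,−t) = 0 and i·∂ₓq3(x,t) + q1(x,t) + q3(x,t)·q1(x,t)·q1(−x,−t) = 0; (2) for all (x,t): |q1(x,t)|² = 4k⁶/((2k⁴x − 2t)² + k⁴) and |q3(x,t)|² = 4k²/((2k⁴x − 2t)² + k⁴). -/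

import Mathlib

open Complex

/-- Partial derivative with respect to the first (space) variable. -/
noncomputable def pdx (f : ℝ × ℝ → ℂ) (p : ℝ × ℝ) : ℂ := fderiv ℝ f p (1, 0)

/-- Partial derivative with respect to the second (time) variable. -/
noncomputable def pdt (f : ℝ × ℝ → ℂ) (p : ℝ × ℝ) : ℂ := fderiv ℝ f p (0, 1)

lemma key_deriv (c α β d1 d0 d2 : ℂ) (p : ℝ × ℝ)
    (hD : d1 * (p.1 : ℂ) + d0 + d2 * (p.2 : ℂ) ≠ 0) :
    pdx (fun p : ℝ × ℝ => c * Complex.exp (α * (p.1 : ℂ) + β * (p.2 : ℂ)) /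
        (d1 * (p.1 : ℂ) + d0 + d2 * (p.2 : ℂ))) p =
      (c * Complex.exp (α * (p.1:ℂ) + β * (p.2:ℂ)) * α * (d1 * (p.1:ℂ) + d0 + d2 * (p.2:ℂ))
        - c * Complex.exp (α * (p.1:ℂ) + β * (p.2:ℂ)) * d1)
        / (d1 * (p.1:ℂ) + d0 + d2 * (p.2:ℂ)) ^ 2 ∧
    pdt (fun p : ℝ × ℝ => c * Complex.exp (α * (p.1 : ℂ) + β * (p.2 : ℂ)) /
        (d1 * (p.1 : ℂ) + d0 + d2 * (p.2 : ℂ))) p =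
      (c * Complex.exp (α * (p.1:ℂ) + β * (p.2:ℂ)) * β * (d1 * (p.1:ℂ) + d0 + d2 * (p.2:ℂ))
        - c * Complex.exp (α * (p.1:ℂ) + β * (p.2:ℂ)) * d2)
        / (d1 * (p.1:ℂ) + d0 + d2 * (p.2:ℂ)) ^ 2 := by
  set f : ℝ × ℝ → ℂ := fun p : ℝ × ℝ => c * Complex.exp (α * (p.1 : ℂ) + β * (p.2 : ℂ)) /
        (d1 * (p.1 : ℂ) + d0 + d2 * (p.2 : ℂ)) with hf
  have h1 : DifferentiableAt ℝ (fun p : ℝ × ℝ => (p.1 : ℂ)) p :=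
    Complex.ofRealCLM.differentiableAt.comp p differentiableAt_fst
  have h2 : DifferentiableAt ℝ (fun p : ℝ × ℝ => (p.2 : ℂ)) p :=
    Complex.ofRealCLM.differentiableAt.comp p differentiableAt_snd
  have hdiff : DifferentiableAt ℝ f p := by
    rw [hf]
    simp only [div_eq_mul_inv]
    exact ((((h1.const_mul α).add (h2.const_mul β)).cexp).const_mul c).mul
      ((((h1.const_mul d1).add_const d0).add (h2.const_mul d2)).inv hD)
  have hL := hdiff.hasFDerivAt
  have hx1 : HasDerivAt (fun s : ℝ => (s : ℂ)) 1 p.1 := by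
    exact (Complex.ofRealCLM.hasDerivAt (x := p.1)).congr_deriv (by simp)
  have ht1 : HasDerivAt (fun s : ℝ => (s : ℂ)) 1 p.2 := by
    exact (Complex.ofRealCLM.hasDerivAt (x := p.2)).congr_deriv (by simp)
  constructor
  · have hline : HasDerivAt (fun s : ℝ => ((s, p.2) : ℝ × ℝ)) ((1:ℝ), (0:ℝ)) p.1 :=
      (hasDerivAt_id p.1).prodMk (hasDerivAt_const p.1 p.2)
    have hcomp := hL.comp_hasDerivAt p.1 hline
    have hN : HasDerivAt (fun s : ℝ => c * Complex.exp (α * (s:ℂ) + β * (p.2:ℂ)))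
        (c * (Complex.exp (α * (p.1:ℂ) + β * (p.2:ℂ)) * (α * 1))) p.1 :=
      (((hx1.const_mul α).add_const (β * (p.2:ℂ))).cexp).const_mul c
    have hDen : HasDerivAt (fun s : ℝ => d1 * (s:ℂ) + d0 + d2 * (p.2:ℂ))
        (d1 * 1) p.1 := ((hx1.const_mul d1).add_const d0).add_const (d2 * (p.2:ℂ))
    have hq := hN.div hDen hD
    have huniq : fderiv ℝ f p (1, 0) = _ := hcomp.unique hq
    rw [pdx, huniq]
    ring
  · have hline : HasDerivAt (fun s : ℝ => ((p.1, s) : ℝ × ℝ)) ((0:ℝ), (1:ℝ)) p.2 :=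
      (hasDerivAt_const p.2 p.1).prodMk (hasDerivAt_id p.2)
    have hcomp := hL.comp_hasDerivAt p.2 hline
    have hN : HasDerivAt (fun s : ℝ => c * Complex.exp (α * (p.1:ℂ) + β * (s:ℂ)))
        (c * (Complex.exp (α * (p.1:ℂ) + β * (p.2:ℂ)) * (β * 1))) p.2 :=
      (((ht1.const_mul β).const_add (α * (p.1:ℂ))).cexp).const_mul c
    have hDen : HasDerivAt (fun s : ℝ => d1 * (p.1:ℂ) + d0 + d2 * (s:ℂ))
        (d2 * 1) p.2 := ((ht1.const_mul d2).const_add (d1 * (p.1:ℂ) + d0))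
    have hq := hN.div hDen hD
    have huniq : fderiv ℝ f p (0, 1) = _ := hcomp.unique hq
    rw [pdt, huniq]
    ring

lemma den_ne_m (k x t : ℝ) (hk : k ≠ 0) :
    (2 * (k:ℂ)^4 * x - I * (k:ℂ)^2 - 2 * t) ≠ 0 := by
  intro h
  have h2 := congrArg Complex.im h
  simp [← Complex.ofReal_pow] at h2
  exact hk (by nlinarith [h2])

lemma den_ne_p (k x t : ℝ) (hk : k ≠ 0) :
    (2 * (k:ℂ)^4 * x + I * (k:ℂ)^2 - 2 * t) ≠ 0 := by
  intro h
  have h2 := congrArg Complex.im h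
  simp [← Complex.ofReal_pow] at h2
  exact hk (by nlinarith [h2])

/-- Algebraic one-soliton solution of the nonlocal massive Thirring model with
`δ = 1`: the denominators never vanish, the equations hold everywhere, and the
squared envelopes are the stated rational functions. -/
theorem algebraicOneSoliton_nonlocalMTM (k : ℝ) (hk : k ≠ 0)
    (θ : ℝ × ℝ → ℂ) (q1 q3 : ℝ × ℝ → ℂ)
    (hθ : θ = fun p => (k : ℂ) ^ 2 * (p.1 : ℂ) + (p.2 : ℂ) / (k : ℂ) ^ 2)
    (hq1 : q1 = fun p =>
      -2 * I * (k : ℂ) ^ 3 * exp (I * θ p)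
        / (2 * (k : ℂ) ^ 4 * (p.1 : ℂ) - I * (k : ℂ) ^ 2 - 2 * (p.2 : ℂ)))
    (hq3 : q3 = fun p =>
      -2 * I * (k : ℂ) * exp (I * θ p)
        / (2 * (k : ℂ) ^ 4 * (p.1 : ℂ) + I * (k : ℂ) ^ 2 - 2 * (p.2 : ℂ))) :
    (∀ p : ℝ × ℝ,
      (2 * (k : ℂ) ^ 4 * (p.1 : ℂ) - I * (k : ℂ) ^ 2 - 2 * (p.2 : ℂ)) ≠ 0 ∧
      (2 * (k : ℂ) ^ 4 * (p.1 : ℂ) + I * (k : ℂ) ^ 2 - 2 * (p.2 : ℂ)) ≠ 0) ∧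
    (∀ p : ℝ × ℝ,
      (I * pdt q1 p + q3 p + q1 p * q3 p * q3 (-p) = 0) ∧
      (I * pdx q3 p + q1 p + q3 p * q1 p * q1 (-p) = 0)) ∧
    (∀ p : ℝ × ℝ,
      ‖q1 p‖ ^ 2
        = 4 * k ^ 6 / ((2 * k ^ 4 * p.1 - 2 * p.2) ^ 2 + k ^ 4) ∧
      ‖q3 p‖ ^ 2
        = 4 * k ^ 2 / ((2 * k ^ 4 * p.1 - 2 * p.2) ^ 2 + k ^ 4)) := by
  have hkC : (k : ℂ) ≠ 0 := Complex.ofReal_ne_zero.mpr hk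
  have hq1' : q1 = fun p : ℝ × ℝ => (-2 * I * (k : ℂ) ^ 3) *
      Complex.exp ((I * (k:ℂ)^2) * (p.1 : ℂ) + (I / (k:ℂ)^2) * (p.2 : ℂ)) /
      ((2 * (k:ℂ)^4) * (p.1 : ℂ) + (-(I * (k:ℂ)^2)) + (-2) * (p.2 : ℂ)) := by
    rw [hq1, hθ]
    funext p
    rw [show I * ((k:ℂ)^2 * (p.1:ℂ) + (p.2:ℂ) / (k:ℂ)^2)
        = (I * (k:ℂ)^2) * (p.1:ℂ) + (I / (k:ℂ)^2) * (p.2:ℂ) by ring]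
    ring
  have hq3' : q3 = fun p : ℝ × ℝ => (-2 * I * (k : ℂ)) *
      Complex.exp ((I * (k:ℂ)^2) * (p.1 : ℂ) + (I / (k:ℂ)^2) * (p.2 : ℂ)) /
      ((2 * (k:ℂ)^4) * (p.1 : ℂ) + (I * (k:ℂ)^2) + (-2) * (p.2 : ℂ)) := by
    rw [hq3, hθ]
    funext p
    rw [show I * ((k:ℂ)^2 * (p.1:ℂ) + (p.2:ℂ) / (k:ℂ)^2)
        = (I * (k:ℂ)^2) * (p.1:ℂ) + (I / (k:ℂ)^2) * (p.2:ℂ) by ring]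
    ring
  refine ⟨fun p => ⟨den_ne_m k p.1 p.2 hk, den_ne_p k p.1 p.2 hk⟩, ?_, ?_⟩
  · intro p
    have e1 : ((2 * (k:ℂ)^4) * (p.1:ℂ) + (-(I * (k:ℂ)^2)) + (-2) * (p.2:ℂ)) ≠ 0 := by
      intro h0; exact den_ne_m k p.1 p.2 hk (by linear_combination h0)
    have e2 : ((2 * (k:ℂ)^4) * (p.1:ℂ) + (I * (k:ℂ)^2) + (-2) * (p.2:ℂ)) ≠ 0 := by
      intro h0; exact den_ne_p k p.1 p.2 hk (by linear_combination h0)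
    have e3 : ((2 * (k:ℂ)^4) * (-(p.1:ℂ)) + (I * (k:ℂ)^2) + (-2) * (-(p.2:ℂ))) ≠ 0 := by
      intro h0; exact den_ne_m k p.1 p.2 hk (by linear_combination -h0)
    have e4 : ((2 * (k:ℂ)^4) * (-(p.1:ℂ)) + (-(I * (k:ℂ)^2)) + (-2) * (-(p.2:ℂ))) ≠ 0 := by
      intro h0; exact den_ne_p k p.1 p.2 hk (by linear_combination -h0)
    have K1 := (key_deriv (-2 * I * (k:ℂ)^3) (I * (k:ℂ)^2) (I / (k:ℂ)^2)
      (2 * (k:ℂ)^4) (-(I * (k:ℂ)^2)) (-2) p e1).2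
    have K3 := (key_deriv (-2 * I * (k:ℂ)) (I * (k:ℂ)^2) (I / (k:ℂ)^2)
      (2 * (k:ℂ)^4) (I * (k:ℂ)^2) (-2) p e2).1
    have hPt : pdt q1 p =
        ((-2 * I * (k:ℂ)^3) * Complex.exp ((I * (k:ℂ)^2) * (p.1:ℂ) + (I / (k:ℂ)^2) * (p.2:ℂ))
          * (I / (k:ℂ)^2)
          * ((2 * (k:ℂ)^4) * (p.1:ℂ) + (-(I * (k:ℂ)^2)) + (-2) * (p.2:ℂ))
        - (-2 * I * (k:ℂ)^3) * Complex.exp ((I * (k:ℂ)^2) * (p.1:ℂ) + (I / (k:ℂ)^2) * (p.2:ℂ))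
          * (-2))
        / ((2 * (k:ℂ)^4) * (p.1:ℂ) + (-(I * (k:ℂ)^2)) + (-2) * (p.2:ℂ)) ^ 2 := by
      rw [hq1']; exact K1
    have hPx : pdx q3 p =
        ((-2 * I * (k:ℂ)) * Complex.exp ((I * (k:ℂ)^2) * (p.1:ℂ) + (I / (k:ℂ)^2) * (p.2:ℂ))
          * (I * (k:ℂ)^2)
          * ((2 * (k:ℂ)^4) * (p.1:ℂ) + (I * (k:ℂ)^2) + (-2) * (p.2:ℂ))
        - (-2 * I * (k:ℂ)) * Complex.exp ((I * (k:ℂ)^2) * (p.1:ℂ) + (I / (k:ℂ)^2) * (p.2:ℂ))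
          * (2 * (k:ℂ)^4))
        / ((2 * (k:ℂ)^4) * (p.1:ℂ) + (I * (k:ℂ)^2) + (-2) * (p.2:ℂ)) ^ 2 := by
      rw [hq3']; exact K3
    have hI2 : (I:ℂ)^2 = -1 := Complex.I_sq
    have hI3 : (I:ℂ)^3 = -I := by rw [pow_succ, hI2]; ring
    have hI4 : (I:ℂ)^4 = 1 := by rw [pow_succ, hI3]; simp [Complex.I_mul_I]
    obtain ⟨E, hEd⟩ : ∃ E : ℂ,
        E = Complex.exp ((I * (k:ℂ)^2) * (p.1:ℂ) + (I / (k:ℂ)^2) * (p.2:ℂ)) := ⟨_, rfl⟩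
    have hEne : E ≠ 0 := by rw [hEd]; exact Complex.exp_ne_zero _
    have hE : Complex.exp (I * (k:ℂ)^2 * (-(p.1:ℂ)) + I / (k:ℂ)^2 * (-(p.2:ℂ))) = E⁻¹ := by
      rw [hEd, ← Complex.exp_neg]
      congr 1
      ring
    rw [← hEd] at hPt hPx
    have hI5 : (I:ℂ)^5 = I := by rw [pow_succ, hI4, one_mul]
    have hI6 : (I:ℂ)^6 = -1 := by rw [pow_succ, hI5, Complex.I_mul_I]
    have hI7 : (I:ℂ)^7 = -I := by rw [pow_succ, hI6]; ring
    have hI8 : (I:ℂ)^8 = 1 := by rw [pow_succ, hI7]; simp [Complex.I_mul_I]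
    constructor
    · rw [hPt, hq1', hq3']
      simp only [Prod.fst_neg, Prod.snd_neg, Complex.ofReal_neg]
      rw [hE, ← hEd]
      rw [show (2 * (k:ℂ)^4 * -(p.1:ℂ) + I * (k:ℂ)^2 + -2 * -(p.2:ℂ))
          = -(2 * (k:ℂ)^4 * (p.1:ℂ) + -(I * (k:ℂ)^2) + -2 * (p.2:ℂ)) from by ring]
      rw [show (-2 * I * (k:ℂ) * E⁻¹ / -(2 * (k:ℂ)^4 * (p.1:ℂ) + -(I * (k:ℂ)^2) + -2 * (p.2:ℂ)))
          = 2 * I * (k:ℂ) / (E * (2 * (k:ℂ)^4 * (p.1:ℂ) + -(I * (k:ℂ)^2) + -2 * (p.2:ℂ))) from by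
        rw [div_neg, show (-2*I*(k:ℂ)*E⁻¹ : ℂ) = -(2*I*(k:ℂ)*E⁻¹) from by ring,
          neg_div, neg_neg, ← div_eq_mul_inv, div_div]]
      rw [← mul_div_assoc]
      rw [div_add_div _ _ (pow_ne_zero 2 e1) e2]
      rw [div_mul_div_comm, div_mul_div_comm]
      rw [div_add_div _ _ (mul_ne_zero (pow_ne_zero 2 e1) e2)
        (mul_ne_zero (mul_ne_zero e1 e2) (mul_ne_zero hEne e1))]
      rw [div_eq_zero_iff]
      left
      field_simp [hkC]
      ring_nf
      simp only [hI2, hI3, hI4, hI5, hI6, hI7, hI8]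
      ring
    · rw [hPx, hq1', hq3']
      simp only [Prod.fst_neg, Prod.snd_neg, Complex.ofReal_neg]
      rw [hE, ← hEd]
      rw [show (2 * (k:ℂ)^4 * -(p.1:ℂ) + -(I * (k:ℂ)^2) + -2 * -(p.2:ℂ))
          = -(2 * (k:ℂ)^4 * (p.1:ℂ) + I * (k:ℂ)^2 + -2 * (p.2:ℂ)) from by ring]
      rw [show (-2 * I * (k:ℂ)^3 * E⁻¹ / -(2 * (k:ℂ)^4 * (p.1:ℂ) + I * (k:ℂ)^2 + -2 * (p.2:ℂ)))
          = 2 * I * (k:ℂ)^3 / (E * (2 * (k:ℂ)^4 * (p.1:ℂ) + I * (k:ℂ)^2 + -2 * (p.2:ℂ))) from by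
        rw [div_neg, show (-2*I*(k:ℂ)^3*E⁻¹ : ℂ) = -(2*I*(k:ℂ)^3*E⁻¹) from by ring,
          neg_div, neg_neg, ← div_eq_mul_inv, div_div]]
      rw [← mul_div_assoc]
      rw [div_add_div _ _ (pow_ne_zero 2 e2) e1]
      rw [div_mul_div_comm, div_mul_div_comm]
      rw [div_add_div _ _ (mul_ne_zero (pow_ne_zero 2 e2) e1)
        (mul_ne_zero (mul_ne_zero e2 e1) (mul_ne_zero hEne e2))]
      rw [div_eq_zero_iff]
      left
      ring_nf
      simp only [hI2, hI3, hI4, hI5, hI6, hI7, hI8]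
      ring
  · intro p
    have habs : Complex.normSq (Complex.exp (I * θ p)) = 1 := by
      rw [← Complex.sq_norm, Complex.norm_exp, hθ]
      simp [← Complex.ofReal_pow, ← Complex.ofReal_div]
    constructor
    · rw [hq1]
      simp only [Complex.sq_norm]
      rw [map_div₀, map_mul, habs, mul_one]
      congr 1
      · simp [Complex.normSq_apply, ← Complex.ofReal_pow]
        ring
      · simp [Complex.normSq_apply, ← Complex.ofReal_pow]
        ring
    · rw [hq3]
      simp only [Complex.sq_norm]
      rw [map_div₀, map_mul, habs, mul_one]
      congr 1
      · simp [Complex.normSq_apply]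
        ring
      · simp [Complex.normSq_apply, ← Complex.ofReal_pow]
        ring
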